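/- Let H be a Hilbert space, (g_i) a Bessel sequence in H with Bessel bound B, and (f_i) a sequence in H such that f = Σᵢ ⟨f, gᵢ⟩ fᵢ for every f ∈ H. Then (f_i) satisfies the lower frame condition with bound 1/B on its analysis domain: for every g ∈ H with Σᵢ |⟨g, fᵢ⟩|² < ∞, one has (1/B)‖g‖² ≤ Σᵢ |⟨g, fᵢ⟩|². -/

import Mathlib

open scoped RealInnerProductSpace

/-- If `(gᵢ)` is Bessel with bound `B` and `f = Σᵢ ⟨f, gᵢ⟩ fᵢ` for all `f`, then `(fᵢ)`
satisfies the lower frame condition with bound `1/B` on its analysis domain. -/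
theorem stmt_5 (H : Type*) [NormedAddCommGroup H] [InnerProductSpace ℝ H]
    (g F : ℕ → H) (B : ℝ) (hB : 0 < B)
    (hBessel : ∀ f : H, Summable (fun i => ⟪f, g i⟫ ^ 2) ∧ ∑' i, ⟪f, g i⟫ ^ 2 ≤ B * ‖f‖ ^ 2)
    (hexp : ∀ f : H, Filter.Tendsto (fun n => ∑ i ∈ Finset.range n, ⟪f, g i⟫ • F i)
      Filter.atTop (nhds f)) :
    ∀ h : H, Summable (fun i => ⟪h, F i⟫ ^ 2) →
      (1 / B) * ‖h‖ ^ 2 ≤ ∑' i, ⟪h, F i⟫ ^ 2 := by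
  intro h hsum
  set T := ∑' i, ⟪h, F i⟫ ^ 2 with hT
  have hT0 : 0 ≤ T := tsum_nonneg fun i => sq_nonneg _
  -- partial-sum Cauchy–Schwarz bound
  have hbound : ∀ n, ∑ i ∈ Finset.range n, ⟪h, g i⟫ * ⟪h, F i⟫ ≤
      Real.sqrt (B * ‖h‖ ^ 2 * T) := by
    intro n
    have hcs := Finset.sum_mul_sq_le_sq_mul_sq (Finset.range n)
      (fun i => ⟪h, g i⟫) (fun i => ⟪h, F i⟫)
    have h1 : ∑ i ∈ Finset.range n, ⟪h, g i⟫ ^ 2 ≤ B * ‖h‖ ^ 2 := by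
      refine le_trans (Summable.sum_le_tsum _ (fun i _ => sq_nonneg _) (hBessel h).1) (hBessel h).2
    have h2 : ∑ i ∈ Finset.range n, ⟪h, F i⟫ ^ 2 ≤ T :=
      Summable.sum_le_tsum _ (fun i _ => sq_nonneg _) hsum
    have hsq : (∑ i ∈ Finset.range n, ⟪h, g i⟫ * ⟪h, F i⟫) ^ 2 ≤ B * ‖h‖ ^ 2 * T := by
      refine hcs.trans (mul_le_mul h1 h2 ?_ ?_)
      · exact Finset.sum_nonneg fun i _ => sq_nonneg _
      · positivity
    calc ∑ i ∈ Finset.range n, ⟪h, g i⟫ * ⟪h, F i⟫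
        ≤ |∑ i ∈ Finset.range n, ⟪h, g i⟫ * ⟪h, F i⟫| := le_abs_self _
      _ ≤ Real.sqrt (B * ‖h‖ ^ 2 * T) := by
          rw [← Real.sqrt_sq_eq_abs]
          exact Real.sqrt_le_sqrt hsq
  -- the partial sums tend to ‖h‖²
  have htend : Filter.Tendsto (fun n => ∑ i ∈ Finset.range n, ⟪h, g i⟫ * ⟪h, F i⟫)
      Filter.atTop (nhds (‖h‖ ^ 2)) := by
    have := Filter.Tendsto.inner (𝕜 := ℝ) (tendsto_const_nhds (x := h)) (hexp h)
    have heq : ∀ n, ⟪h, ∑ i ∈ Finset.range n, ⟪h, g i⟫ • F i⟫ =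
        ∑ i ∈ Finset.range n, ⟪h, g i⟫ * ⟪h, F i⟫ := by
      intro n
      simp [inner_sum, real_inner_smul_right]
    rw [real_inner_self_eq_norm_sq] at this
    simpa only [heq] using this
  have hmain : ‖h‖ ^ 2 ≤ Real.sqrt (B * ‖h‖ ^ 2 * T) :=
    le_of_tendsto htend (Filter.Eventually.of_forall hbound)
  -- conclude
  rcases eq_or_ne h 0 with rfl | hne
  · simpa using hT0
  · have hn : 0 < ‖h‖ := norm_pos_iff.mpr hne
    have hsq : (‖h‖ ^ 2) ^ 2 ≤ B * ‖h‖ ^ 2 * T := by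
      have := Real.sq_sqrt (by positivity : (0:ℝ) ≤ B * ‖h‖ ^ 2 * T)
      nlinarith [hmain, Real.sqrt_nonneg (B * ‖h‖ ^ 2 * T)]
    have hn2 : (0:ℝ) < ‖h‖ ^ 2 := by positivity
    rw [div_mul_eq_mul_div, div_le_iff₀ hB]
    nlinarith [hsq, hn2]
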